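/- Every series-parallel pomset is N-free: it contains no subpomset isomorphic to the poset on four elements {x1, x2, x3, x4} with relations x1 < x2, x3 < x2, x3 < x4 and no other relations. -/
import Mathlib


/-- A finite labelled strict poset with carrier type `α`. A pomset is an
isomorphism class of such structures. -/
structure LPoset (σ : Type) where
  α : Type
  fin : Finite α
  lt : α → α → Prop
  lt_irrefl : ∀ x, ¬ lt x x
  lt_trans : ∀ x y z, lt x y → lt y z → lt x z
  label : α → σ

/-- Isomorphism of labelled posets: a bijection preserving order (both ways)
and labels. Equality of pomsets is isomorphism of representatives. -/
def LPoset.Iso {σ : Type} (A B : LPoset σ) : Prop :=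
  ∃ f : A.α ≃ B.α, (∀ x y, A.lt x y ↔ B.lt (f x) (f y)) ∧ ∀ x, B.label (f x) = A.label x

/-- Parallel composition: disjoint union, no cross ordering. -/
def LPoset.par {σ : Type} (A B : LPoset σ) : LPoset σ where
  α := A.α ⊕ B.α
  fin := by have := A.fin; have := B.fin; infer_instance
  lt := fun x y =>
    match x, y with
    | .inl a, .inl b => A.lt a b
    | .inr a, .inr b => B.lt a b
    | _, _ => False
  lt_irrefl := by
    rintro (a | a) h
    · exact A.lt_irrefl a h
    · exact B.lt_irrefl a h
  lt_trans := by
    rintro (a | a) (b | b) (c | c) h1 h2 <;> simp_all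
    · exact A.lt_trans _ _ _ h1 h2
    · exact B.lt_trans _ _ _ h1 h2
  label := Sum.elim A.label B.label

/-- Sequential composition: disjoint union, everything in `A` below everything in `B`. -/
def LPoset.seq {σ : Type} (A B : LPoset σ) : LPoset σ where
  α := A.α ⊕ B.α
  fin := by have := A.fin; have := B.fin; infer_instance
  lt := fun x y =>
    match x, y with
    | .inl a, .inl b => A.lt a b
    | .inr a, .inr b => B.lt a b
    | .inl _, .inr _ => True
    | .inr _, .inl _ => False
  lt_irrefl := by
    rintro (a | a) h
    · exact A.lt_irrefl a h
    · exact B.lt_irrefl a h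
  lt_trans := by
    rintro (a | a) (b | b) (c | c) h1 h2 <;> simp_all
    · exact A.lt_trans _ _ _ h1 h2
    · exact B.lt_trans _ _ _ h1 h2
  label := Sum.elim A.label B.label

/-- The set SP of series-parallel pomsets: the smallest set of pomsets
(i.e. closed under isomorphism) containing the empty pomset and the
singleton pomsets, closed under sequential and parallel composition. -/
inductive IsSP {σ : Type} : LPoset σ → Prop
  | empty (A : LPoset σ) (h : IsEmpty A.α) : IsSP A
  | single (A : LPoset σ) (h1 : Nonempty A.α) (h2 : Subsingleton A.α) : IsSP A
  | seq {A B : LPoset σ} : IsSP A → IsSP B → IsSP (A.seq B)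
  | par {A B : LPoset σ} : IsSP A → IsSP B → IsSP (A.par B)
  | iso {A B : LPoset σ} : IsSP A → LPoset.Iso A B → IsSP B

/-- `B` is a subpomset of `A`: an injection of carriers preserving
labelling and preserving the order in both directions. -/
def LPoset.Subpomset {σ : Type} (B A : LPoset σ) : Prop :=
  ∃ f : B.α → A.α, Function.Injective f ∧
    (∀ x y, B.lt x y ↔ A.lt (f x) (f y)) ∧ ∀ x, A.label (f x) = B.label x

/-- The N pattern: four elements x1, x2, x3, x4 with x1 < x2, x3 < x2, x3 < x4
and no other relations, with labelling ℓ. -/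
def NPoset {σ : Type} (ℓ : Fin 4 → σ) : LPoset σ where
  α := Fin 4
  fin := inferInstance
  lt := fun x y => (x = 0 ∧ y = 1) ∨ (x = 2 ∧ y = 1) ∨ (x = 2 ∧ y = 3)
  lt_irrefl := by decide
  lt_trans := by decide
  label := ℓ

/-- A pomset is N-free if no N pattern (for any labelling) embeds into it. -/
def NFree {σ : Type} (A : LPoset σ) : Prop :=
  ¬ ∃ ℓ : Fin 4 → σ, (NPoset ℓ).Subpomset A


theorem NPoset_alpha {σ : Type} (ℓ : Fin 4 → σ) : (NPoset ℓ).α = Fin 4 := rfl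

theorem NPoset_label {σ : Type} (ℓ : Fin 4 → σ) : (NPoset ℓ).label = ℓ := rfl

/-- Every series-parallel pomset is N-free. -/
theorem sp_is_nfree {σ : Type} (A : LPoset σ) (h : IsSP A) : NFree A := by
  induction h with
  | empty A h =>
    rintro ⟨ℓ, f, -⟩
    exact h.elim (f (0 : Fin 4))
  | single A h1 h2 =>
    rintro ⟨ℓ, f, hinj, -⟩
    haveI := h2
    exact absurd (hinj (Subsingleton.elim (f (0 : Fin 4)) (f (1 : Fin 4))))
      (show (0 : Fin 4) ≠ 1 by decide)
  | seq hA hB ihA ihB =>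
    rename_i A B
    rintro ⟨ℓ, f, hinj, hord, hlab⟩
    simp only [NPoset_alpha, NPoset_label] at f hord hlab
    have h01 := (hord 0 1).mp (Or.inl ⟨rfl, rfl⟩)
    have h21 := (hord 2 1).mp (Or.inr (Or.inl ⟨rfl, rfl⟩))
    have h23 := (hord 2 3).mp (Or.inr (Or.inr ⟨rfl, rfl⟩))
    have n03 : ¬ (A.seq B).lt (f 0) (f 3) := fun hc => by
      have := (hord 0 3).mpr hc
      simp [NPoset] at this
    have n31 : ¬ (A.seq B).lt (f 3) (f 1) := fun hc => by
      have := (hord 3 1).mpr hc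
      simp [NPoset] at this
    have n20 : ¬ (A.seq B).lt (f 2) (f 0) := fun hc => by
      have := (hord 2 0).mpr hc
      simp [NPoset] at this
    rcases h0 : f 0 with a0 | a0 <;> rcases h1 : f 1 with a1 | a1 <;>
      rcases h2 : f 2 with a2 | a2 <;> rcases h3 : f 3 with a3 | a3 <;>
      simp only [LPoset.seq, h0, h1, h2, h3, not_true, not_false_iff] at h01 h21 h23 n03 n31 n20 <;> skip
    · -- all in A
      have hf : ∀ x : Fin 4, f x = Sum.inl (![a0, a1, a2, a3] x) := by
        intro x; fin_cases x <;> simpa using ‹_›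
      refine ihA ⟨ℓ, ![a0, a1, a2, a3], ?_, ?_, ?_⟩
      · intro x y hxy
        apply hinj
        rw [hf x, hf y, hxy]
      · intro x y
        rw [hord x y, hf x, hf y]
        exact Iff.rfl
      · intro x
        have := hlab x
        rw [hf x] at this
        exact this
    · -- all in B
      have hf : ∀ x : Fin 4, f x = Sum.inr (![a0, a1, a2, a3] x) := by
        intro x; fin_cases x <;> simpa using ‹_›
      refine ihB ⟨ℓ, ![a0, a1, a2, a3], ?_, ?_, ?_⟩
      · intro x y hxy
        apply hinj
        rw [hf x, hf y, hxy]
      · intro x y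
        rw [hord x y, hf x, hf y]
        exact Iff.rfl
      · intro x
        have := hlab x
        rw [hf x] at this
        exact this
  | par hA hB ihA ihB =>
    rename_i A B
    rintro ⟨ℓ, f, hinj, hord, hlab⟩
    simp only [NPoset_alpha, NPoset_label] at f hord hlab
    have h01 := (hord 0 1).mp (Or.inl ⟨rfl, rfl⟩)
    have h21 := (hord 2 1).mp (Or.inr (Or.inl ⟨rfl, rfl⟩))
    have h23 := (hord 2 3).mp (Or.inr (Or.inr ⟨rfl, rfl⟩))
    rcases h0 : f 0 with a0 | a0 <;> rcases h1 : f 1 with a1 | a1 <;>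
      rcases h2 : f 2 with a2 | a2 <;> rcases h3 : f 3 with a3 | a3 <;>
      simp only [LPoset.par, h0, h1, h2, h3, not_true, not_false_iff] at h01 h21 h23 <;> skip
    · -- all in A
      have hf : ∀ x : Fin 4, f x = Sum.inl (![a0, a1, a2, a3] x) := by
        intro x; fin_cases x <;> simpa using ‹_›
      refine ihA ⟨ℓ, ![a0, a1, a2, a3], ?_, ?_, ?_⟩
      · intro x y hxy
        apply hinj
        rw [hf x, hf y, hxy]
      · intro x y
        rw [hord x y, hf x, hf y]
        exact Iff.rfl
      · intro x
        have := hlab x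
        rw [hf x] at this
        exact this
    · -- all in B
      have hf : ∀ x : Fin 4, f x = Sum.inr (![a0, a1, a2, a3] x) := by
        intro x; fin_cases x <;> simpa using ‹_›
      refine ihB ⟨ℓ, ![a0, a1, a2, a3], ?_, ?_, ?_⟩
      · intro x y hxy
        apply hinj
        rw [hf x, hf y, hxy]
      · intro x y
        rw [hord x y, hf x, hf y]
        exact Iff.rfl
      · intro x
        have := hlab x
        rw [hf x] at this
        exact this
  | iso hA hiso ih =>
    rintro ⟨ℓ, f, hinj, hord, hlab⟩
    simp only [NPoset_alpha, NPoset_label] at f hord hlab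
    obtain ⟨e, he, hl⟩ := hiso
    refine ih ⟨ℓ, fun x => e.symm (f x), ?_, ?_, ?_⟩
    · intro x y hxy
      exact hinj (e.symm.injective hxy)
    · intro x y
      rw [hord x y, he]
      simp
    · intro x
      rw [← hl, Equiv.apply_symm_apply]
      exact hlab x
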